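/- Let b₁, b₂, b₃ : I → ℝ on an interval I, let u₁, u₂, u₃ : I → ℝ be differentiable solutions of the Riccati equation u'(t) = b₁(t) + b₂(t)u(t) + b₃(t)u(t)² whose pairwise differences never vanish on I, and let k ∈ ℝ be such that D(t) := (u₁(t) − u₃(t))·k + (u₃(t) − u₂(t)) ≠ 0 for all t ∈ I. Then u(t) := ((u₁(t) − u₃(t))·u₂(t)·k + u₁(t)·(u₃(t) − u₂(t))) / D(t) is also a solution of the Riccati equation on I. Thus the Riccati equation admits the superposition rule u = Φ(u₁, u₂, u₃; k) of m = 3 particular solutions given by this formula. -/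

import Mathlib

/-- Superposition rule for the Riccati equation with `m = 3` particular
solutions: if `u₁, u₂, u₃` are solutions of `u' = b₁ + b₂u + b₃u²` on `I`
whose pairwise differences never vanish, `k ∈ ℝ`, and the denominator
`D = (u₁ − u₃)k + (u₃ − u₂)` never vanishes on `I`, then
`u = ((u₁ − u₃)u₂k + u₁(u₃ − u₂)) / D` is also a solution on `I`. -/
theorem stmt_16 (I : Set ℝ) (b₁ b₂ b₃ : ℝ → ℝ) (u₁ u₂ u₃ : ℝ → ℝ)
    (hu₁ : ∀ t ∈ I, HasDerivAt u₁ (b₁ t + b₂ t * u₁ t + b₃ t * u₁ t ^ 2) t)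
    (hu₂ : ∀ t ∈ I, HasDerivAt u₂ (b₁ t + b₂ t * u₂ t + b₃ t * u₂ t ^ 2) t)
    (hu₃ : ∀ t ∈ I, HasDerivAt u₃ (b₁ t + b₂ t * u₃ t + b₃ t * u₃ t ^ 2) t)
    (hpair : ∀ t ∈ I, u₁ t ≠ u₂ t ∧ u₁ t ≠ u₃ t ∧ u₂ t ≠ u₃ t)
    (k : ℝ)
    (hD : ∀ t ∈ I, (u₁ t - u₃ t) * k + (u₃ t - u₂ t) ≠ 0)
    (u : ℝ → ℝ)
    (hu : u = fun s =>
      ((u₁ s - u₃ s) * u₂ s * k + u₁ s * (u₃ s - u₂ s))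
        / ((u₁ s - u₃ s) * k + (u₃ s - u₂ s))) :
    ∀ t ∈ I, HasDerivAt u (b₁ t + b₂ t * u t + b₃ t * u t ^ 2) t := by
  intro t ht
  have h1 := hu₁ t ht
  have h2 := hu₂ t ht
  have h3 := hu₃ t ht
  have hDt := hD t ht
  set d₁ := b₁ t + b₂ t * u₁ t + b₃ t * u₁ t ^ 2 with hd1
  set d₂ := b₁ t + b₂ t * u₂ t + b₃ t * u₂ t ^ 2 with hd2
  set d₃ := b₁ t + b₂ t * u₃ t + b₃ t * u₃ t ^ 2 with hd3
  have hN : HasDerivAt (fun s => (u₁ s - u₃ s) * u₂ s * k + u₁ s * (u₃ s - u₂ s))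
      (((d₁ - d₃) * u₂ t + (u₁ t - u₃ t) * d₂) * k + (d₁ * (u₃ t - u₂ t) + u₁ t * (d₃ - d₂))) t :=
    (((h1.sub h3).mul h2).mul_const k).add (h1.mul (h3.sub h2))
  have hDD : HasDerivAt (fun s => (u₁ s - u₃ s) * k + (u₃ s - u₂ s))
      ((d₁ - d₃) * k + (d₃ - d₂)) t :=
    ((h1.sub h3).mul_const k).add (h3.sub h2)
  have hq := hN.div hDD hDt
  rw [hu]
  convert hq using 1
  · rfl
  · rfl
  · rfl
  field_simp
  ring
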